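/- Overhead bound: suppose F is closed under tensor powers (σ ∈ F ⟹ σ^{⊗k} ∈ F appropriately) and Ω(ρ) > 1. If there is a probabilistic free transformation of ρ^{⊗n} to a state τ with ⟨φ|τ|φ⟩ ≥ 1 - ε for a pure state φ with 0 < F_F(φ) < 1 and ε < 1 - F_F(φ), then n ≥ log_{Ω(ρ)} [ (1-ε)(1-F_F(φ)) / (ε F_F(φ)) ]. -/

import Mathlib

open scoped ENNReal NNReal ComplexOrder
open Matrix

variable {ι κ : Type*}

/-- Max-relative entropy (non-logarithmic): `inf { λ ≥ 0 : ρ ≤ λσ }`, with `inf ∅ = ∞`.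
Here `A ≤ B` means `B - A` is positive semidefinite. -/
noncomputable def Rmax [Fintype ι] (ρ σ : Matrix ι ι ℂ) : ℝ≥0∞ :=
  sInf {x : ℝ≥0∞ | ∃ l : ℝ≥0, x = (l : ℝ≥0∞) ∧ ((l : ℝ) • σ - ρ).PosSemidef}

/-- A state: positive semidefinite with unit trace. -/
def IsState [Fintype ι] (ρ : Matrix ι ι ℂ) : Prop :=
  ρ.PosSemidef ∧ ρ.trace = 1

/-- A pure state: a rank-one (idempotent) state. -/
def IsPure [Fintype ι] (φ : Matrix ι ι ℂ) : Prop :=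
  φ.PosSemidef ∧ φ * φ = φ ∧ φ.trace = 1

/-- The cone generated by a set of states. -/
noncomputable def cone (F : Set (Matrix ι ι ℂ)) : Set (Matrix ι ι ℂ) :=
  {x | ∃ (l : ℝ≥0) (σ : Matrix ι ι ℂ), σ ∈ F ∧ x = (l : ℝ) • σ}

/-- Projective robustness `Ω(ρ) = inf_{σ ∈ F} Rmax(ρ‖σ) Rmax(σ‖ρ)`. -/
noncomputable def Omega [Fintype ι] (F : Set (Matrix ι ι ℂ)) (ρ : Matrix ι ι ℂ) : ℝ≥0∞ :=
  ⨅ σ ∈ F, Rmax ρ σ * Rmax σ ρ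

/-- Support of an operator, as the range of the associated linear map. -/
noncomputable def msupport [Fintype ι] (ρ : Matrix ι ι ℂ) : Submodule ℂ (ι → ℂ) :=
  LinearMap.range ρ.mulVecLin

/-- A positive linear map on matrices. -/
def IsPosMap [Fintype ι] [Fintype κ] (E : Matrix ι ι ℂ →ₗ[ℂ] Matrix κ κ ℂ) : Prop :=
  ∀ ρ, ρ.PosSemidef → (E ρ).PosSemidef

/-- Maximal fidelity with the free set: `F_F(φ) = max_{σ ∈ F} ⟨φ|σ|φ⟩ = max_{σ ∈ F} Tr(φσ)`. -/
noncomputable def Ffree [Fintype ι] (F : Set (Matrix ι ι ℂ)) (φ : Matrix ι ι ℂ) : ℝ :=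
  sSup {x : ℝ | ∃ σ ∈ F, x = ((φ * σ).trace).re}
/-- `n`-fold tensor power of a matrix (iterated Kronecker product). -/
noncomputable def tpow [Fintype ι] (ρ : Matrix ι ι ℂ) (n : ℕ) :
    Matrix (Fin n → ι) (Fin n → ι) ℂ :=
  Matrix.of fun i j => ∏ t, ρ (i t) (j t)

section Aux
open scoped Kronecker

variable {a b : Type*}

lemma rsmul_eq (r : ℝ) (A : Matrix ι ι ℂ) : r • A = (r : ℂ) • A := by
  ext i j; simp [Complex.real_smul]

lemma psd_add' [Fintype ι] {A B : Matrix ι ι ℂ} (hA : A.PosSemidef) (hB : B.PosSemidef) :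
    (A + B).PosSemidef := by
  refine ⟨hA.1.add hB.1, fun x => ?_⟩
  exact (hA.add hB).2 x

lemma psd_smul' [Fintype ι] {A : Matrix ι ι ℂ} (hA : A.PosSemidef) {r : ℝ} (hr : 0 ≤ r) :
    (r • A).PosSemidef := by
  rw [rsmul_eq]
  have hr' : (0 : ℂ) ≤ (r : ℂ) := Complex.zero_le_real.2 hr
  refine ⟨?_, fun x => ?_⟩
  · have hst : star (r : ℂ) = (r : ℂ) := by simp
    simpa [Matrix.IsHermitian, Matrix.conjTranspose_smul, hst] using
      congrArg (fun M => (r : ℂ) • M) hA.1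
  · exact (hA.smul hr').2 x

lemma psd_diag_nonneg [Fintype ι] [DecidableEq ι] {A : Matrix ι ι ℂ} (hA : A.PosSemidef)
    (i : ι) : 0 ≤ A i i := by
  exact hA.diag_nonneg

lemma psd_trace_nonneg [Fintype ι] [DecidableEq ι] {A : Matrix ι ι ℂ} (hA : A.PosSemidef) :
    0 ≤ A.trace :=
  Finset.sum_nonneg fun i _ => psd_diag_nonneg hA i

open scoped MatrixOrder in
lemma Matrix.posSemidef_iff_eq_transpose_mul_self [Fintype ι]
    {B : Matrix ι ι ℂ} : B.PosSemidef ↔ ∃ C : Matrix ι ι ℂ, B = Cᴴ * C := by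
  classical
  refine ⟨fun hB => ⟨CFC.sqrt B, ?_⟩, fun ⟨C, hC⟩ => hC ▸ Matrix.posSemidef_conjTranspose_mul_self C⟩
  rw [(CFC.sqrt_nonneg B).posSemidef.1.eq, CFC.sqrt_mul_sqrt_self B hB.nonneg]

lemma psd_trace_mul_nonneg [Fintype ι] [DecidableEq ι] {A B : Matrix ι ι ℂ}
    (hA : A.PosSemidef) (hB : B.PosSemidef) : 0 ≤ (A * B).trace := by
  obtain ⟨C, rfl⟩ := Matrix.posSemidef_iff_eq_transpose_mul_self.mp hB
  rw [← Matrix.mul_assoc, Matrix.trace_mul_cycle]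
  exact psd_trace_nonneg (hA.mul_mul_conjTranspose_same C)

lemma re_nonneg_of_nonneg {z : ℂ} (h : 0 ≤ z) : 0 ≤ z.re := (Complex.le_def.mp h).1

lemma kron_conjTranspose (A : Matrix a a ℂ) (B : Matrix b b ℂ) :
    (A ⊗ₖ B)ᴴ = Aᴴ ⊗ₖ Bᴴ := by
  ext ⟨i, j⟩ ⟨k, l⟩
  simp [Matrix.conjTranspose_apply, Matrix.kroneckerMap_apply, star_mul', mul_comm]

lemma kron_psd [Fintype a] [Fintype b] {A : Matrix a a ℂ} {B : Matrix b b ℂ}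
    (hA : A.PosSemidef) (hB : B.PosSemidef) : (A ⊗ₖ B).PosSemidef := by
  obtain ⟨C, rfl⟩ := Matrix.posSemidef_iff_eq_transpose_mul_self.mp hA
  obtain ⟨D, rfl⟩ := Matrix.posSemidef_iff_eq_transpose_mul_self.mp hB
  have h : (Cᴴ * C) ⊗ₖ (Dᴴ * D) = (C ⊗ₖ D)ᴴ * (C ⊗ₖ D) := by
    rw [kron_conjTranspose, Matrix.mul_kronecker_mul]
  rw [h]
  exact Matrix.posSemidef_conjTranspose_mul_self _

lemma tpow_succ [Fintype ι] (X : Matrix ι ι ℂ) (n : ℕ) :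
    tpow X (n + 1) = (X ⊗ₖ tpow X n).submatrix
      (fun i : Fin (n+1) → ι => (i 0, fun t : Fin n => i t.succ))
      (fun i : Fin (n+1) → ι => (i 0, fun t : Fin n => i t.succ)) := by
  ext i j
  simp [tpow, Matrix.submatrix_apply, Matrix.kroneckerMap_apply, Fin.prod_univ_succ]

lemma tpow_zero_psd [Fintype ι] (X : Matrix ι ι ℂ) : (tpow X 0).PosSemidef := by
  have h : tpow X 0 = (1 : Matrix (Fin 0 → ι) (Fin 0 → ι) ℂ) := by
    ext i j
    have : i = j := Subsingleton.elim i j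
    subst this
    simp [tpow, Matrix.one_apply]
  rw [h]; exact Matrix.PosSemidef.one

lemma tpow_psd [Fintype ι] {X : Matrix ι ι ℂ} (hX : X.PosSemidef) (n : ℕ) :
    (tpow X n).PosSemidef := by
  induction n with
  | zero => exact tpow_zero_psd X
  | succ n ih =>
    rw [tpow_succ]
    exact (kron_psd hX ih).submatrix _

lemma tpow_sub_psd [Fintype ι] {A B : Matrix ι ι ℂ} (hA : A.PosSemidef)
    (hAB : (B - A).PosSemidef) (n : ℕ) : (tpow B n - tpow A n).PosSemidef := by
  have hB : B.PosSemidef := by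
    have h : B = A + (B - A) := by abel
    rw [h]; exact psd_add' hA hAB
  induction n with
  | zero =>
    have h : tpow B 0 - tpow A 0 = 0 := by
      ext i j; have : i = j := Subsingleton.elim i j; subst this; simp [tpow]
    rw [h]; exact Matrix.PosSemidef.zero
  | succ n ih =>
    rw [tpow_succ, tpow_succ]
    have key : B ⊗ₖ tpow B n - A ⊗ₖ tpow A n
        = B ⊗ₖ (tpow B n - tpow A n) + (B - A) ⊗ₖ tpow A n := by
      ext ⟨i, j⟩ ⟨k, l⟩
      simp only [Matrix.sub_apply, Matrix.add_apply, Matrix.kroneckerMap_apply]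
      ring
    have hpsd : (B ⊗ₖ tpow B n - A ⊗ₖ tpow A n).PosSemidef := by
      rw [key]
      exact psd_add' (kron_psd hB ih) (kron_psd hAB (tpow_psd hA n))
    exact hpsd.submatrix _

lemma tpow_smul [Fintype ι] (r : ℝ) (X : Matrix ι ι ℂ) (n : ℕ) :
    tpow (r • X) n = (r ^ n : ℝ) • tpow X n := by
  ext i j
  simp only [tpow, Matrix.of_apply, Matrix.smul_apply, Complex.real_smul,
    Finset.prod_mul_distrib, Finset.prod_const, Finset.card_univ, Fintype.card_fin]
  push_cast
  ring

/-- Trace of a state is 1 hence any feasible `Rmax` scalar between states is at least 1. -/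
lemma one_le_feasible [Fintype ι] [DecidableEq ι] {ρ σ : Matrix ι ι ℂ}
    (hρ : IsState ρ) (hσ : IsState σ) {l : ℝ≥0} (h : ((l : ℝ) • σ - ρ).PosSemidef) :
    (1 : ℝ≥0) ≤ l := by
  have ht := psd_trace_nonneg h
  rw [Matrix.trace_sub, Matrix.trace_smul, hρ.2, hσ.2] at ht
  have := re_nonneg_of_nonneg ht
  simp only [Complex.sub_re, Complex.real_smul, Complex.one_re, Complex.mul_re,
    Complex.ofReal_re, Complex.ofReal_im, Complex.one_im] at this
  have h1 : (1:ℝ) ≤ (l:ℝ) := by nlinarith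
  exact_mod_cast h1

lemma one_sub_pure_psd [Fintype ι] [DecidableEq ι] {φ : Matrix ι ι ℂ} (hφ : IsPure φ) :
    ((1 : Matrix ι ι ℂ) - φ).PosSemidef := by
  have h1 : ((1 : Matrix ι ι ℂ) - φ)ᴴ = 1 - φ := by
    rw [Matrix.conjTranspose_sub, Matrix.conjTranspose_one, hφ.1.isHermitian]
  have h2 : ((1 : Matrix ι ι ℂ) - φ) * (1 - φ) = 1 - φ := by
    simp only [Matrix.mul_sub, Matrix.sub_mul, Matrix.one_mul, Matrix.mul_one, hφ.2.1]
    abel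
  have h3 : (1 : Matrix ι ι ℂ) - φ = ((1 : Matrix ι ι ℂ) - φ)ᴴ * (1 - φ) := by
    rw [h1, h2]
  rw [h3]
  exact Matrix.posSemidef_conjTranspose_mul_self _

/-- fidelity with the free set bounds. -/
lemma trace_mul_le_one [Fintype ι] [DecidableEq ι] {φ σ : Matrix ι ι ℂ}
    (hφ : IsPure φ) (hσ : IsState σ) : ((φ * σ).trace).re ≤ 1 := by
  have h := psd_trace_mul_nonneg (one_sub_pure_psd hφ) hσ.1
  rw [Matrix.sub_mul, Matrix.one_mul, Matrix.trace_sub, hσ.2] at h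
  have := re_nonneg_of_nonneg h
  simp only [Complex.sub_re, Complex.one_re] at this
  linarith

lemma fid_bound [Fintype κ] [DecidableEq κ] (G : Set (Matrix κ κ ℂ))
    (hGstate : ∀ σ ∈ G, IsState σ) (φ : Matrix κ κ ℂ) (hφ : IsPure φ)
    (hFφ0 : 0 < Ffree G φ) (τ : Matrix κ κ ℂ) (hτ : IsState τ)
    {σ' : Matrix κ κ ℂ} (hσ'G : σ' ∈ G) {A B : ℝ} (hA0 : 0 ≤ A) (hB0 : 0 ≤ B)
    (hpa : (A • σ' - τ).PosSemidef) (hpb : (B • τ - σ').PosSemidef)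
    {ε : ℝ} (hε0 : 0 < ε) (hε : ε < 1 - Ffree G φ)
    (hfid : 1 - ε ≤ ((φ * τ).trace).re) :
    (1 - ε) * (1 - Ffree G φ) / (ε * Ffree G φ) ≤ A * B := by
  set f := Ffree G φ with hf
  have hσ' : IsState σ' := hGstate σ' hσ'G
  set t := ((φ * τ).trace).re with htdef
  set s := ((φ * σ').trace).re with hsdef
  have hbdd : BddAbove {x : ℝ | ∃ σ ∈ G, x = ((φ * σ).trace).re} := by
    refine ⟨1, fun x hx => ?_⟩
    obtain ⟨σ, hσG, rfl⟩ := hx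
    exact trace_mul_le_one hφ (hGstate σ hσG)
  have hsf : s ≤ f := le_csSup hbdd ⟨σ', hσ'G, rfl⟩
  have ht1 : t ≤ 1 := trace_mul_le_one hφ hτ
  -- A·s ≥ t
  have h1 : t ≤ A * s := by
    have h := psd_trace_mul_nonneg hφ.1 hpa
    rw [Matrix.mul_sub, Matrix.mul_smul, Matrix.trace_sub, Matrix.trace_smul] at h
    have := re_nonneg_of_nonneg h
    simp only [Complex.sub_re, Complex.real_smul, Complex.mul_re, Complex.ofReal_re,
      Complex.ofReal_im] at this
    nlinarith
  -- B·(1−t) ≥ 1−s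
  have h2 : 1 - s ≤ B * (1 - t) := by
    have h := psd_trace_mul_nonneg (one_sub_pure_psd hφ) hpb
    simp only [Matrix.sub_mul, Matrix.mul_sub, Matrix.one_mul, Matrix.mul_smul,
      Matrix.trace_sub, Matrix.trace_smul, hτ.2, hσ'.2] at h
    have := re_nonneg_of_nonneg h
    simp only [Complex.sub_re, Complex.real_smul, Complex.mul_re, Complex.ofReal_re,
      Complex.ofReal_im, Complex.one_re, Complex.one_im] at this
    nlinarith
  have hfε : f < 1 - ε := by linarith
  have hAlb : (1 - ε) / f ≤ A := by
    rw [div_le_iff₀ hFφ0]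
    calc (1 - ε) ≤ t := hfid
    _ ≤ A * s := h1
    _ ≤ A * f := by nlinarith
  have hBlb : (1 - f) / ε ≤ B := by
    rw [div_le_iff₀ hε0]
    calc (1 - f) ≤ B * (1 - t) := by linarith [h2, hsf]
    _ ≤ B * ε := by nlinarith
  have heq : (1 - ε) * (1 - f) / (ε * f) = ((1 - ε) / f) * ((1 - f) / ε) := by
    rw [div_mul_div_comm, mul_comm ε f]
  rw [heq]
  have hA' : 0 ≤ (1 - ε) / f := div_nonneg (by linarith) hFφ0.le
  have hB' : 0 ≤ (1 - f) / ε := div_nonneg (by linarith) hε0.le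
  exact mul_le_mul hAlb hBlb hB' (le_trans hA' hAlb)

end Aux

/-- overhead bound: any probabilistic free transformation of `ρ^{⊗n}` into a state
`τ` with fidelity `⟨φ|τ|φ⟩ ≥ 1-ε` to a resourceful pure `φ` requires
`n ≥ log_{Ω(ρ)} [(1-ε)(1-F_F(φ)) / (ε F_F(φ))]`. -/


theorem omega_distillation_overhead [Fintype ι] [DecidableEq ι]
    [Fintype κ] [DecidableEq κ] (n : ℕ)
    (F : Set (Matrix ι ι ℂ)) (hFne : F.Nonempty) (hFcpt : IsCompact F)
    (hFconv : Convex ℝ F) (hFstate : ∀ σ ∈ F, IsState σ)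
    (Fn : Set (Matrix (Fin n → ι) (Fin n → ι) ℂ)) (hFnne : Fn.Nonempty)
    (hFncpt : IsCompact Fn) (hFnconv : Convex ℝ Fn) (hFnstate : ∀ σ ∈ Fn, IsState σ)
    (htens : ∀ σ ∈ F, tpow σ n ∈ Fn)
    (G : Set (Matrix κ κ ℂ)) (hGne : G.Nonempty) (hGcpt : IsCompact G)
    (hGconv : Convex ℝ G) (hGstate : ∀ σ ∈ G, IsState σ)
    (ρ : Matrix ι ι ℂ) (hρ : IsState ρ)
    (hΩgt : 1 < Omega F ρ) (hΩfin : Omega F ρ ≠ ⊤)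
    (φ : Matrix κ κ ℂ) (hφ : IsPure φ)
    (hFφ0 : 0 < Ffree G φ) (hFφ1 : Ffree G φ < 1)
    (E : Matrix (Fin n → ι) (Fin n → ι) ℂ →ₗ[ℂ] Matrix κ κ ℂ) (hE : IsPosMap E)
    (hEfree : ∀ x ∈ cone Fn, E x ∈ cone G)
    (τ : Matrix κ κ ℂ) (hτ : IsState τ)
    (p : ℝ) (hp : 0 < p) (hEρ : E (tpow ρ n) = p • τ)
    (ε : ℝ) (hε0 : 0 < ε) (hε : ε < 1 - Ffree G φ)
    (hfid : 1 - ε ≤ ((φ * τ).trace).re) :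
    Real.logb (Omega F ρ).toReal ((1 - ε) * (1 - Ffree G φ) / (ε * Ffree G φ)) ≤ n := by
  classical
  set f := Ffree G φ with hfdef
  set ratio := (1 - ε) * (1 - f) / (ε * f) with hratiodef
  have hkey : ∀ c : ℝ≥0, Omega F ρ < (c : ℝ≥0∞) → ratio ≤ (c : ℝ) ^ n := by
    intro c hc
    rw [Omega, iInf_lt_iff] at hc
    obtain ⟨σ, hc⟩ := hc
    rw [iInf_lt_iff] at hc
    obtain ⟨hσF, hlt⟩ := hc
    have hσst : IsState σ := hFstate σ hσF
    have hA1 : 1 ≤ Rmax ρ σ := le_sInf fun x hx => by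
      obtain ⟨l, rfl, hpsd⟩ := hx
      exact_mod_cast one_le_feasible hρ hσst hpsd
    have hB1 : 1 ≤ Rmax σ ρ := le_sInf fun x hx => by
      obtain ⟨l, rfl, hpsd⟩ := hx
      exact_mod_cast one_le_feasible hσst hρ hpsd
    have hAfin : Rmax ρ σ ≠ ⊤ :=
      ((le_mul_of_one_le_right zero_le hB1).trans_lt
        (hlt.trans_le le_top)).ne
    have hBfin : Rmax σ ρ ≠ ⊤ :=
      ((le_mul_of_one_le_left zero_le hA1).trans_lt
        (hlt.trans_le le_top)).ne
    set a := (Rmax ρ σ).toNNReal with hadef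
    set b := (Rmax σ ρ).toNNReal with hbdef
    have hAa : Rmax ρ σ = (a : ℝ≥0∞) := (ENNReal.coe_toNNReal hAfin).symm
    have hBb : Rmax σ ρ = (b : ℝ≥0∞) := (ENNReal.coe_toNNReal hBfin).symm
    have hab : a * b < c := by
      rw [hAa, hBb, ← ENNReal.coe_mul] at hlt
      exact_mod_cast hlt
    have ha1 : (1 : ℝ≥0) ≤ a := by
      rw [hAa] at hA1; exact_mod_cast hA1
    have hb1 : (1 : ℝ≥0) ≤ b := by
      rw [hBb] at hB1; exact_mod_cast hB1
    have ha0 : (0 : ℝ≥0) < a := lt_of_lt_of_le zero_lt_one ha1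
    have hb0 : (0 : ℝ≥0) < b := lt_of_lt_of_le zero_lt_one hb1
    have hab0 : a * b ≠ 0 := (mul_pos ha0 hb0).ne'
    set d := c / (a * b) with hddef
    have hd1 : 1 < d := by
      rw [hddef, lt_div_iff₀ (pos_iff_ne_zero.mpr hab0), one_mul]
      exact hab
    set sq := NNReal.sqrt d with hsqdef
    have hs1 : 1 < sq := by
      by_contra hh
      push_neg at hh
      have hdle : d ≤ 1 := by
        calc d = sq * sq := (NNReal.mul_self_sqrt d).symm
        _ ≤ 1 * 1 := mul_le_mul hh hh zero_le zero_le_one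
        _ = 1 := one_mul 1
      exact absurd hd1 (not_lt.mpr hdle)
    have hlamlt : Rmax ρ σ < ((a * sq : ℝ≥0) : ℝ≥0∞) := by
      rw [hAa]
      exact_mod_cast (lt_mul_iff_one_lt_right ha0).mpr hs1
    have hmult : Rmax σ ρ < ((b * sq : ℝ≥0) : ℝ≥0∞) := by
      rw [hBb]
      exact_mod_cast (lt_mul_iff_one_lt_right hb0).mpr hs1
    rw [Rmax] at hlamlt hmult
    obtain ⟨x, hxS, hxlt⟩ := sInf_lt_iff.mp hlamlt
    obtain ⟨lam, rfl, hlampsd⟩ := hxS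
    have hlam : lam < a * sq := by exact_mod_cast hxlt
    obtain ⟨y, hyS, hylt⟩ := sInf_lt_iff.mp hmult
    obtain ⟨mu, rfl, hmupsd⟩ := hyS
    have hmu : mu < b * sq := by exact_mod_cast hylt
    have hlm : (lam : ℝ) * (mu : ℝ) ≤ (c : ℝ) := by
      have h5 : lam * mu ≤ c := by
        calc lam * mu ≤ (a * sq) * (b * sq) :=
          mul_le_mul hlam.le hmu.le zero_le zero_le
        _ = (a * b) * (sq * sq) := by ring
        _ = (a * b) * d := by rw [NNReal.mul_self_sqrt]
        _ = c := by rw [hddef, mul_comm, div_mul_cancel₀ _ hab0]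
      exact_mod_cast h5
    -- tensor power step
    have h1 : (((lam : ℝ) ^ n) • tpow σ n - tpow ρ n).PosSemidef := by
      have h := tpow_sub_psd (A := ρ) (B := ((lam : ℝ)) • σ) hρ.1 hlampsd n
      rwa [tpow_smul] at h
    have h2 : (((mu : ℝ) ^ n) • tpow ρ n - tpow σ n).PosSemidef := by
      have h := tpow_sub_psd (A := σ) (B := ((mu : ℝ)) • ρ) hσst.1 hmupsd n
      rwa [tpow_smul] at h
    -- apply the free transformation
    have hcone : tpow σ n ∈ cone Fn := ⟨1, tpow σ n, htens σ hσF, by simp⟩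
    obtain ⟨l, σ', hσ'G, hES⟩ := hEfree _ hcone
    have hP1 : (((lam : ℝ) ^ n) • ((l : ℝ) • σ') - p • τ).PosSemidef := by
      have h := hE _ h1
      rwa [map_sub, LinearMap.map_smul_of_tower, hES, hEρ] at h
    have hP2 : (((mu : ℝ) ^ n) • (p • τ) - (l : ℝ) • σ').PosSemidef := by
      have h := hE _ h2
      rwa [map_sub, LinearMap.map_smul_of_tower, hES, hEρ] at h
    have hl0 : (0 : ℝ) < l := by
      rcases eq_zero_or_pos l with hl | hl
      · exfalso
        rw [hl] at hP1
        have ht := psd_trace_nonneg hP1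
        simp only [NNReal.coe_zero, zero_smul, smul_zero, zero_sub, Matrix.trace_neg,
          Matrix.trace_smul, hτ.2] at ht
        have hre := re_nonneg_of_nonneg ht
        simp only [Complex.neg_re, Complex.real_smul, Complex.mul_re, Complex.ofReal_re,
          Complex.ofReal_im, Complex.one_re, Complex.one_im] at hre
        nlinarith
      · exact_mod_cast hl
    -- rescale to feasible pairs for τ and σ'
    have hQ1 : ((((lam : ℝ) ^ n * l / p)) • σ' - τ).PosSemidef := by
      have h := psd_smul' hP1 (r := 1 / p) (by positivity)
      have e : (1 / p) • (((lam : ℝ) ^ n) • ((l : ℝ) • σ') - p • τ)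
          = ((lam : ℝ) ^ n * l / p) • σ' - τ := by
        rw [smul_sub, smul_smul, smul_smul, smul_smul, one_div_mul_cancel hp.ne', one_smul]
        have hxy : 1 / p * (lam : ℝ) ^ n * l = (lam : ℝ) ^ n * l / p := by ring
        rw [hxy]
      rwa [e] at h
    have hQ2 : ((((mu : ℝ) ^ n * p / l)) • τ - σ').PosSemidef := by
      have h := psd_smul' hP2 (r := 1 / (l : ℝ)) (by positivity)
      have e : (1 / (l : ℝ)) • (((mu : ℝ) ^ n) • (p • τ) - (l : ℝ) • σ')
          = ((mu : ℝ) ^ n * p / l) • τ - σ' := by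
        rw [smul_sub, smul_smul, smul_smul, smul_smul, one_div_mul_cancel hl0.ne', one_smul]
        have hxy : 1 / (l : ℝ) * (mu : ℝ) ^ n * p = (mu : ℝ) ^ n * p / l := by ring
        rw [hxy]
      rwa [e] at h
    have hfb := fid_bound G hGstate φ hφ hFφ0 τ hτ hσ'G
      (A := (lam : ℝ) ^ n * l / p) (B := (mu : ℝ) ^ n * p / l)
      (by positivity) (by positivity) hQ1 hQ2 hε0 hε hfid
    have hABeq : (lam : ℝ) ^ n * l / p * ((mu : ℝ) ^ n * p / l) = ((lam : ℝ) * mu) ^ n := by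
      field_simp
      ring
    calc ratio ≤ (lam : ℝ) ^ n * l / p * ((mu : ℝ) ^ n * p / l) := hfb
    _ = ((lam : ℝ) * mu) ^ n := hABeq
    _ ≤ (c : ℝ) ^ n := by
        apply pow_le_pow_left₀ (by positivity) hlm
  have hlim : ratio ≤ (Omega F ρ).toReal ^ n := by
    have hseq : ∀ k : ℕ, ratio ≤ ((Omega F ρ).toReal + 1 / ((k : ℝ) + 1)) ^ n := by
      intro k
      set ck : ℝ≥0 := (Omega F ρ).toNNReal + ((k : ℝ≥0) + 1)⁻¹ with hck
      have hlt : Omega F ρ < (ck : ℝ≥0∞) := by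
        conv_lhs => rw [← ENNReal.coe_toNNReal hΩfin]
        rw [hck, ENNReal.coe_add]
        exact ENNReal.lt_add_right ENNReal.coe_ne_top
          (by exact_mod_cast (by positivity : ((k : ℝ≥0) + 1)⁻¹ ≠ 0))
      have hcoe : ((ck : ℝ≥0) : ℝ) = (Omega F ρ).toReal + 1 / ((k : ℝ) + 1) := by
        rw [hck]
        push_cast
        rw [one_div]
      calc ratio ≤ ((ck : ℝ≥0) : ℝ) ^ n := hkey ck hlt
      _ = ((Omega F ρ).toReal + 1 / ((k : ℝ) + 1)) ^ n := by rw [hcoe]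
    have htend : Filter.Tendsto
        (fun k : ℕ => ((Omega F ρ).toReal + 1 / ((k : ℝ) + 1)) ^ n)
        Filter.atTop (nhds (((Omega F ρ).toReal + 0) ^ n)) :=
      (Filter.Tendsto.add tendsto_const_nhds tendsto_one_div_add_atTop_nhds_zero_nat).pow n
    have := ge_of_tendsto' htend hseq
    simpa using this
  have hb1 : 1 < (Omega F ρ).toReal := by
    have h := (ENNReal.toReal_lt_toReal (by simp) hΩfin).mpr hΩgt
    simpa using h
  have hratio_pos : 0 < ratio := by
    have h1 : 0 < 1 - ε := by linarith
    have h2 : 0 < 1 - f := by linarith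
    exact div_pos (mul_pos h1 h2) (mul_pos hε0 hFφ0)
  rw [Real.logb_le_iff_le_rpow hb1 hratio_pos, Real.rpow_natCast]
  exact hlim
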